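/- The two tangent lines at two distinct boundary points meet in a single point lying outside the closed ball. Concretely: let v, w : Fin 3 → ℂ be linearly independent vectors with B(v,v) = 0 and B(w,w) = 0. Then the subspace {u : Fin 3 → ℂ | B(v,u) = 0 ∧ B(w,u) = 0} has complex dimension 1, and every nonzero u in this subspace satisfies Re(B(u,u)) > 0. -/

import Mathlib

open Matrix

/-- The linear functional `w ↦ B(v, w)` for the Hermitian form `B` of signature
(1,2), where `B(v,w) = star v ⬝ᵥ (diagonal ![-1,1,1]).mulVec w`. -/
noncomputable def hermitianForm (v : Fin 3 → ℂ) : (Fin 3 → ℂ) →ₗ[ℂ] ℂ where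
  toFun w := star v ⬝ᵥ (Matrix.diagonal ![-1, 1, 1] : Matrix (Fin 3) (Fin 3) ℂ).mulVec w
  map_add' x y := by simp [Matrix.mulVec_add, dotProduct_add]
  map_smul' c x := by simp [Matrix.mulVec_smul, dotProduct_smul]

open ComplexConjugate in
lemma Bexpand (x y : Fin 3 → ℂ) :
    star x ⬝ᵥ (Matrix.diagonal ![-1, 1, 1] : Matrix (Fin 3) (Fin 3) ℂ).mulVec y
      = -(conj (x 0) * y 0) + conj (x 1) * y 1 + conj (x 2) * y 2 := by
  simp [dotProduct, Matrix.mulVec_diagonal, Fin.sum_univ_three, Pi.star_apply,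
    RCLike.star_def]

open ComplexConjugate in
lemma hfexpand (x y : Fin 3 → ℂ) :
    hermitianForm x y = -(conj (x 0) * y 0) + conj (x 1) * y 1 + conj (x 2) * y 2 := by
  rw [← Bexpand]; rfl

open ComplexConjugate in
/-- An isotropic vector with vanishing first coordinate is zero. -/
lemma isotropic_zero (x : Fin 3 → ℂ)
    (hx : star x ⬝ᵥ (Matrix.diagonal ![-1, 1, 1] : Matrix (Fin 3) (Fin 3) ℂ).mulVec x = 0)
    (h0 : x 0 = 0) : x = 0 := by
  rw [Bexpand, h0] at hx
  have h : ((Complex.normSq (x 1) + Complex.normSq (x 2) : ℝ) : ℂ) = 0 := by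
    push_cast
    rw [← Complex.mul_conj, ← Complex.mul_conj]
    linear_combination hx
  have h2 : Complex.normSq (x 1) + Complex.normSq (x 2) = 0 := by exact_mod_cast h
  have h1 : x 1 = 0 ∧ x 2 = 0 := by
    constructor <;> [skip; skip] <;>
      · rw [← Complex.normSq_eq_zero]
        nlinarith [Complex.normSq_nonneg (x 1), Complex.normSq_nonneg (x 2)]
  funext i
  fin_cases i <;> simp [h0, h1.1, h1.2]

open ComplexConjugate in
/-- The tangent lines at two distinct boundary points meet in a single point,
which lies outside the closed ball. -/
theorem tangent_lines_meet_outside_ball (v w : Fin 3 → ℂ)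
    (hvw : LinearIndependent ℂ ![v, w])
    (hv : star v ⬝ᵥ (Matrix.diagonal ![-1, 1, 1] : Matrix (Fin 3) (Fin 3) ℂ).mulVec v = 0)
    (hw : star w ⬝ᵥ (Matrix.diagonal ![-1, 1, 1] : Matrix (Fin 3) (Fin 3) ℂ).mulVec w = 0) :
    Module.finrank ℂ (LinearMap.ker (hermitianForm v) ⊓ LinearMap.ker (hermitianForm w) :
      Submodule ℂ (Fin 3 → ℂ)) = 1 ∧
    ∀ u ∈ LinearMap.ker (hermitianForm v) ⊓ LinearMap.ker (hermitianForm w), u ≠ 0 →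
      0 < (star u ⬝ᵥ (Matrix.diagonal ![-1, 1, 1] : Matrix (Fin 3) (Fin 3) ℂ).mulVec u).re := by
  have hpair := LinearIndependent.pair_iff.mp hvw
  rw [Bexpand] at hv hw
  -- first coordinates are nonzero
  have hvne : v ≠ 0 := by
    intro h; obtain ⟨h1, -⟩ := hpair 1 0 (by simp [h]); exact one_ne_zero h1
  have hwne : w ≠ 0 := by
    intro h; obtain ⟨-, h1⟩ := hpair 0 1 (by simp [h]); exact one_ne_zero h1
  have hv0 : v 0 ≠ 0 := fun h => hvne (isotropic_zero v (by rw [Bexpand]; exact hv) h)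
  have hw0 : w 0 ≠ 0 := fun h => hwne (isotropic_zero w (by rw [Bexpand]; exact hw) h)
  set c : ℂ := -(conj (v 0) * w 0) + conj (v 1) * w 1 + conj (v 2) * w 2 with hc_def
  -- B(v,w) is nonzero
  have hc : c ≠ 0 := by
    intro hc0
    have hcc : -(conj (w 0) * v 0) + conj (w 1) * v 1 + conj (w 2) * v 2 = 0 := by
      have h : conj (-(conj (v 0) * w 0) + conj (v 1) * w 1 + conj (v 2) * w 2) = 0 := by
        rw [← hc_def, hc0, map_zero]
      simp only [map_add, map_neg, _root_.map_mul, Complex.conj_conj] at h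
      linear_combination h
    set z : Fin 3 → ℂ := w 0 • v - v 0 • w with hz_def
    have hz0 : z 0 = 0 := by simp [hz_def]; ring
    have hzz : star z ⬝ᵥ (Matrix.diagonal ![-1, 1, 1] : Matrix (Fin 3) (Fin 3) ℂ).mulVec z
        = 0 := by
      rw [Bexpand]
      simp only [hz_def, Pi.sub_apply, Pi.smul_apply, smul_eq_mul, map_sub, _root_.map_mul,
        Complex.conj_conj]
      linear_combination (conj (w 0) * w 0) * hv + (conj (v 0) * v 0) * hw
        - (conj (w 0) * v 0) * hc0 - (conj (v 0) * w 0) * hcc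
    have hz := isotropic_zero z hzz hz0
    obtain ⟨h1, -⟩ := hpair (w 0) (-(v 0)) (by rw [neg_smul, ← sub_eq_add_neg, ← hz_def, hz])
    exact hw0 h1
  -- values of the two functionals
  have hfv : hermitianForm v v = 0 := by rw [hfexpand]; exact hv
  have hgw : hermitianForm w w = 0 := by rw [hfexpand]; exact hw
  have hfw : hermitianForm v w = c := by rw [hfexpand]
  have hgv : hermitianForm w v = conj c := by
    rw [hfexpand, hc_def]
    simp only [map_add, map_neg, _root_.map_mul, Complex.conj_conj]
    ring
  -- the product map is surjective
  set L : (Fin 3 → ℂ) →ₗ[ℂ] ℂ × ℂ := (hermitianForm v).prod (hermitianForm w) with hL_def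
  have hLsurj : Function.Surjective L := by
    rintro ⟨x, y⟩
    refine ⟨(y / conj c) • v + (x / c) • w, ?_⟩
    have hcc : conj c ≠ 0 := by simpa using hc
    simp only [hL_def, LinearMap.prod_apply, Pi.prod, Function.prod, map_add, _root_.map_smul, hfv, hfw, hgv, hgw,
      smul_eq_mul]
    rw [Prod.smul_mk, Prod.smul_mk, Prod.mk_add_mk, Prod.mk.injEq]
    constructor <;> simp only [smul_eq_mul] <;> field_simp <;> ring
  -- dimension count
  have hker : LinearMap.ker L = LinearMap.ker (hermitianForm v) ⊓ LinearMap.ker (hermitianForm w) :=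
    LinearMap.ker_prod _ _
  have hrank : Module.finrank ℂ (LinearMap.ker L : Submodule ℂ (Fin 3 → ℂ)) = 1 := by
    have h1 := LinearMap.finrank_range_add_finrank_ker L
    rw [LinearMap.range_eq_top.mpr hLsurj, finrank_top] at h1
    simp only [Module.finrank_prod, Module.finrank_self, Module.finrank_pi, Fintype.card_fin] at h1 ⊢
    omega
  -- the explicit intersection point
  set u₀ : Fin 3 → ℂ := ![-(conj (v 1 * w 2 - v 2 * w 1)), conj (v 2 * w 0 - v 0 * w 2),
    conj (v 0 * w 1 - v 1 * w 0)] with hu_def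
  have hu₀v : hermitianForm v u₀ = 0 := by
    rw [hfexpand]
    simp only [hu_def, Matrix.cons_val_zero, Matrix.cons_val_one, Matrix.head_cons,
      Matrix.cons_val_two, Matrix.tail_cons, map_sub, _root_.map_mul, Complex.conj_conj]
    ring
  have hu₀w : hermitianForm w u₀ = 0 := by
    rw [hfexpand]
    simp only [hu_def, Matrix.cons_val_zero, Matrix.cons_val_one, Matrix.head_cons,
      Matrix.cons_val_two, Matrix.tail_cons, map_sub, _root_.map_mul, Complex.conj_conj]
    ring
  have hBu : star u₀ ⬝ᵥ (Matrix.diagonal ![-1, 1, 1] : Matrix (Fin 3) (Fin 3) ℂ).mulVec u₀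
      = c * conj c := by
    rw [Bexpand, hc_def]
    simp only [hu_def, Matrix.cons_val_zero, Matrix.cons_val_one, Matrix.head_cons,
      Matrix.cons_val_two, Matrix.tail_cons, map_sub, _root_.map_mul, map_neg, map_add,
      Complex.conj_conj]
    linear_combination (-(-(conj (w 0) * w 0) + conj (w 1) * w 1 + conj (w 2) * w 2)) * hv
  have hu₀mem : u₀ ∈ LinearMap.ker (hermitianForm v) ⊓ LinearMap.ker (hermitianForm w) :=
    Submodule.mem_inf.mpr ⟨LinearMap.mem_ker.mpr hu₀v, LinearMap.mem_ker.mpr hu₀w⟩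
  have hu₀ne : u₀ ≠ 0 := by
    intro h
    rw [h] at hBu
    simp only [star_zero, dotProduct_zero, Matrix.mulVec_zero] at hBu
    exact mul_ne_zero hc (by simpa using hc) hBu.symm
  rw [← hker] at hu₀mem ⊢
  refine ⟨hrank, fun u hu hune => ?_⟩
  -- every element of the kernel is a multiple of `u₀`
  set e₀ : LinearMap.ker L := ⟨u₀, hu₀mem⟩ with he_def
  have he₀ne : e₀ ≠ 0 := fun h => hu₀ne (congrArg Subtype.val h)
  obtain ⟨a, ha⟩ := (finrank_eq_one_iff_of_nonzero' e₀ he₀ne).mp hrank ⟨u, hu⟩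
  have hua : u = a • u₀ := (congrArg Subtype.val ha).symm
  have ha0 : a ≠ 0 := by intro h; apply hune; rw [hua, h, zero_smul]
  have hsmul : star u ⬝ᵥ (Matrix.diagonal ![-1, 1, 1] : Matrix (Fin 3) (Fin 3) ℂ).mulVec u
      = conj a * a * (c * conj c) := by
    rw [Bexpand] at hBu
    rw [hua, Bexpand]
    simp only [Pi.smul_apply, smul_eq_mul, _root_.map_mul]
    linear_combination conj a * a * hBu
  have hval : star u ⬝ᵥ (Matrix.diagonal ![-1, 1, 1] : Matrix (Fin 3) (Fin 3) ℂ).mulVec u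
      = ((Complex.normSq a * Complex.normSq c : ℝ) : ℂ) := by
    rw [hsmul, Complex.ofReal_mul, ← Complex.mul_conj, ← Complex.mul_conj]
    ring
  rw [hval, Complex.ofReal_re]
  exact mul_pos (Complex.normSq_pos.mpr ha0) (Complex.normSq_pos.mpr hc)
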